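/- arXiv:0906.1319 — 3 statements merged into one kernel-verified Lean document; each statement's English description precedes it below -/
import Mathlib

section
/- Let n ≥ 1, P ≥ 1 be integers and set l_n = (3·2^{n-1} - 1)/2 (a half-integer). Then for every real x, |Σ_{l=2^{n-1}}^{2^n - 1} [1/(x - (2l-1)πi) - Σ_{ν=0}^{P-1} (2(l - l_n)πi)^ν/(x - (2l_n - 1)πi)^{ν+1}]| ≤ 1/(2π·3^P). -/
open Finset


theorem geom_tail48 (P : ℕ) (w a : ℂ) (hw : w ≠ 0) (hwa : w - a ≠ 0) :
    1 / (w - a) - ∑ ν ∈ range P, a ^ ν / w ^ (ν + 1)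
      = a ^ P / (w ^ P * (w - a)) := by
  induction P with
  | zero => simp
  | succ P ih =>
    rw [Finset.sum_range_succ, show 1 / (w - a) - (∑ ν ∈ range P, a ^ ν / w ^ (ν + 1) + a ^ P / w ^ (P+1)) = (1 / (w - a) - ∑ ν ∈ range P, a ^ ν / w ^ (ν + 1)) - a ^ P / w ^ (P+1) by ring, ih]
    have hwp : w ^ P ≠ 0 := pow_ne_zero _ hw
    field_simp
    ring



theorem int_abs_sum48 (m : ℕ) :
    2 * ∑ k ∈ range m, |2*(k:ℤ) + 1 - m| ≤ (m:ℤ)^2 := by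
  induction m using Nat.twoStepInduction with
  | zero => simp
  | one => norm_num
  | more m ih _ =>
    rw [Finset.sum_range_succ', Finset.sum_range_succ]
    have h1 : ∀ k ∈ range m, |2*((k+1:ℕ):ℤ) + 1 - ((m+2:ℕ):ℤ)| = |2*(k:ℤ) + 1 - m| := by
      intro k hk; congr 1; push_cast; ring
    rw [Finset.sum_congr rfl h1]
    have h2 : |2*(((m:ℕ)+1:ℕ):ℤ) + 1 - ((m+2:ℕ):ℤ)| = (m:ℤ) + 1 := by
      push_cast
      rw [show 2*((m:ℤ)+1) + 1 - ((m:ℤ)+2) = (m:ℤ)+1 by ring, abs_of_nonneg]; positivity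
    have h3 : |2*((0:ℕ):ℤ) + 1 - ((m+2:ℕ):ℤ)| = (m:ℤ) + 1 := by
      push_cast
      rw [show (1:ℤ) - ((m:ℤ)+2) = -((m:ℤ)+1) by ring, abs_neg, abs_of_nonneg]; positivity
    rw [h2, h3]
    push_cast
    nlinarith [ih]

theorem real_abs_sum48 (m : ℕ) :
    ∑ k ∈ range m, |2*(k:ℝ) + 1 - m| ≤ (m:ℝ)^2 / 2 := by
  have h := int_abs_sum48 m
  have h2 : ((2 * ∑ k ∈ range m, |2*(k:ℤ) + 1 - m| : ℤ) : ℝ) ≤ (((m:ℤ)^2 : ℤ) : ℝ) := by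
    exact_mod_cast h
  push_cast at h2
  linarith

theorem sum_bound48 (m P : ℕ) (hm1 : 1 ≤ m) (hP : 1 ≤ P) :
    ∑ l ∈ Finset.Icc m (2*m-1),
      (|2*(l:ℝ) - (3*(m:ℝ)-1)| * Real.pi)^P /
        (((3*(m:ℝ)-2)*Real.pi)^P * ((2*(m:ℝ)-1)*Real.pi))
      ≤ 1/(2*Real.pi*3^P) := by
  have hpi := Real.pi_pos
  have hM1 : (1:ℝ) ≤ (m:ℝ) := by exact_mod_cast hm1
  have hA0 : (0:ℝ) < 3*(m:ℝ)-2 := by linarith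
  have hB0 : (0:ℝ) < 2*(m:ℝ)-1 := by linarith
  set C : ℝ := (1/3)^(P-1) / ((3*(m:ℝ)-2) * (2*(m:ℝ)-1) * Real.pi) with hC
  have hC0 : 0 ≤ C := by positivity
  have hterm : ∀ l ∈ Finset.Icc m (2*m-1),
      (|2*(l:ℝ) - (3*(m:ℝ)-1)| * Real.pi)^P /
        (((3*(m:ℝ)-2)*Real.pi)^P * ((2*(m:ℝ)-1)*Real.pi))
      ≤ C * |2*(l:ℝ) - (3*(m:ℝ)-1)| := by
    intro l hl
    rw [Finset.mem_Icc] at hl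
    have hl1 : (m:ℝ) ≤ (l:ℝ) := by exact_mod_cast hl.1
    have hl2 : (l:ℝ) ≤ 2*(m:ℝ) - 1 := by
      have : (l:ℕ) + 1 ≤ 2*m := by omega
      have := (Nat.cast_le (α := ℝ)).mpr this
      push_cast at this; linarith
    set t : ℝ := |2*(l:ℝ) - (3*(m:ℝ)-1)| with ht
    have ht0 : 0 ≤ t := abs_nonneg _
    have htle : t ≤ (m:ℝ) - 1 := abs_le.mpr ⟨by linarith, by linarith⟩
    have heq : (t * Real.pi)^P / (((3*(m:ℝ)-2)*Real.pi)^P * ((2*(m:ℝ)-1)*Real.pi))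
        = (t/(3*(m:ℝ)-2))^P / ((2*(m:ℝ)-1)*Real.pi) := by
      rw [mul_pow, mul_pow, div_pow]
      field_simp
    rw [heq]
    have hr : t/(3*(m:ℝ)-2) ≤ 1/3 := by
      rw [div_le_div_iff₀ hA0 (by norm_num)]; linarith
    have hr0 : 0 ≤ t/(3*(m:ℝ)-2) := by positivity
    have hpow : (t/(3*(m:ℝ)-2))^P ≤ (1/3)^(P-1) * (t/(3*(m:ℝ)-2)) := by
      calc (t/(3*(m:ℝ)-2))^P = (t/(3*(m:ℝ)-2))^(P-1) * (t/(3*(m:ℝ)-2)) := by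
            rw [← pow_succ]; congr 1; omega
        _ ≤ (1/3)^(P-1) * (t/(3*(m:ℝ)-2)) :=
            mul_le_mul_of_nonneg_right (pow_le_pow_left₀ hr0 hr _) hr0
    calc (t/(3*(m:ℝ)-2))^P / ((2*(m:ℝ)-1)*Real.pi)
        ≤ ((1/3)^(P-1) * (t/(3*(m:ℝ)-2))) / ((2*(m:ℝ)-1)*Real.pi) := by
          apply div_le_div_of_nonneg_right hpow (by positivity) |>.trans_eq rfl
      _ = C * t := by rw [hC]; field_simp
  have hsum1 : ∑ l ∈ Finset.Icc m (2*m-1),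
      (|2*(l:ℝ) - (3*(m:ℝ)-1)| * Real.pi)^P /
        (((3*(m:ℝ)-2)*Real.pi)^P * ((2*(m:ℝ)-1)*Real.pi))
      ≤ C * ∑ l ∈ Finset.Icc m (2*m-1), |2*(l:ℝ) - (3*(m:ℝ)-1)| := by
    rw [Finset.mul_sum]
    exact Finset.sum_le_sum hterm
  have hsum2 : ∑ l ∈ Finset.Icc m (2*m-1), |2*(l:ℝ) - (3*(m:ℝ)-1)|
      = ∑ k ∈ range m, |2*(k:ℝ) + 1 - (m:ℝ)| := by
    rw [← Finset.Ico_add_one_right_eq_Icc, show 2*m-1+1 = 2*m from by omega, Finset.sum_Ico_eq_sum_range,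
      show 2*m-m = m by omega]
    apply Finset.sum_congr rfl
    intro k hk
    congr 1
    push_cast
    ring
  have hsum3 := real_abs_sum48 m
  rcases eq_or_lt_of_le hm1 with h1 | h2
  · -- m = 1
    have hm : m = 1 := h1.symm
    subst hm
    refine hsum1.trans ?_
    rw [hsum2]
    have hz : ∑ k ∈ range 1, |2*(k:ℝ) + 1 - ((1:ℕ):ℝ)| = 0 := by
      norm_num
    rw [hz, mul_zero]
    positivity
  · -- m ≥ 2
    have hM2 : (2:ℝ) ≤ (m:ℝ) := by exact_mod_cast h2
    refine hsum1.trans ?_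
    rw [hsum2]
    have hkey : C * ((m:ℝ)^2/2) ≤ 1/(2*Real.pi*3^P) := by
      have h3 : (3:ℝ)^P = 3^(P-1) * 3 := by rw [← pow_succ]; congr 1; omega
      have hD0 : (0:ℝ) < (3:ℝ)^(P-1) := by positivity
      have hq : 3*(m:ℝ)^2 ≤ (3*(m:ℝ)-2)*(2*(m:ℝ)-1) := by nlinarith
      have hDpi : (0:ℝ) < 3^(P-1) * Real.pi := mul_pos hD0 hpi
      have hqq := mul_le_mul_of_nonneg_right hq hDpi.le
      have hpos1 : (0:ℝ) < 2 * 3^(P-1) * ((3*(m:ℝ)-2) * (2*(m:ℝ)-1) * Real.pi) :=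
        mul_pos (by positivity) (mul_pos (mul_pos hA0 hB0) hpi)
      have e : C * ((m:ℝ)^2/2)
          = (m:ℝ)^2 / (2 * 3^(P-1) * ((3*(m:ℝ)-2) * (2*(m:ℝ)-1) * Real.pi)) := by
        rw [hC, show (1/3:ℝ)^(P-1) = 1/3^(P-1) by rw [div_pow, one_pow]]
        field_simp
      rw [e, div_le_div_iff₀ hpos1 (by positivity), h3]
      nlinarith [hqq]
    calc C * ∑ k ∈ range m, |2*(k:ℝ) + 1 - (m:ℝ)|
        ≤ C * ((m:ℝ)^2/2) := mul_le_mul_of_nonneg_left hsum3 hC0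
      _ ≤ 1/(2*Real.pi*3^P) := hkey

open Complex in
theorem multipole_group_truncation_error (n P : ℕ) (hn : 1 ≤ n) (hP : 1 ≤ P) (x : ℝ) :
    ‖∑ l ∈ Finset.Icc ((2:ℕ) ^ (n - 1)) (2 ^ n - 1),
        (1 / ((x : ℂ) - (2 * (l : ℂ) - 1) * Real.pi * Complex.I)
          - ∑ ν ∈ Finset.range P,
              (2 * ((l : ℂ) - (3 * 2 ^ (n - 1) - 1) / 2) * Real.pi * Complex.I) ^ ν
                / ((x : ℂ) - (2 * ((3 * 2 ^ (n - 1) - 1 : ℂ) / 2) - 1) * Real.pi * Complex.I)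
                  ^ (ν + 1))‖
      ≤ 1 / (2 * Real.pi * 3 ^ P) := by
  have hpi := Real.pi_pos
  set m : ℕ := 2^(n-1) with hm
  have hm1 : 1 ≤ m := Nat.one_le_two_pow
  have hM1 : (1:ℝ) ≤ (m:ℝ) := by exact_mod_cast hm1
  have hIcc : Finset.Icc ((2:ℕ)^(n-1)) (2^n - 1) = Finset.Icc m (2*m - 1) := by
    have h2 : (2:ℕ)^n = 2 * 2^(n-1) := by
      rw [← pow_succ']; congr 1; omega
    rw [hm]; congr 1; omega
  have hmc : ((m:ℕ):ℂ) = (2:ℂ)^(n-1) := by rw [hm]; push_cast; ring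
  set w : ℂ := (x:ℂ) - (((3*(m:ℝ) - 2) * Real.pi : ℝ) : ℂ) * I with hwdef
  set a : ℕ → ℂ := fun l => (((2*(l:ℝ) - (3*(m:ℝ) - 1)) * Real.pi : ℝ) : ℂ) * I with hadef
  have hA0 : (0:ℝ) < (3*(m:ℝ)-2)*Real.pi := mul_pos (by linarith) hpi
  have hB0 : (0:ℝ) < (2*(m:ℝ)-1)*Real.pi := mul_pos (by linarith) hpi
  have hwim : w.im = -((3*(m:ℝ)-2) * Real.pi) := by simp [hwdef]
  have hw : w ≠ 0 := by
    intro h; rw [h] at hwim; simp only [Complex.zero_im] at hwim; linarith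
  have hwa : ∀ l : ℕ, w - a l = (x:ℂ) - (((2*(l:ℝ)-1) * Real.pi : ℝ):ℂ) * I := by
    intro l; rw [hwdef, hadef]; push_cast; ring
  have hwaim : ∀ l : ℕ, (w - a l).im = -((2*(l:ℝ)-1)*Real.pi) := by
    intro l; rw [hwa]; simp
  have hlcast : ∀ l ∈ Finset.Icc m (2*m-1), (m:ℝ) ≤ (l:ℝ) ∧ (l:ℝ) ≤ 2*(m:ℝ)-1 := by
    intro l hl
    have hl' := Finset.mem_Icc.mp hl
    constructor
    · exact_mod_cast hl'.1
    · have : (l:ℕ) + 1 ≤ 2*m := by omega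
      have := (Nat.cast_le (α := ℝ)).mpr this
      push_cast at this; linarith
  have hwane : ∀ l ∈ Finset.Icc m (2*m-1), w - a l ≠ 0 := by
    intro l hl h
    have h1 := hwaim l
    rw [h] at h1; simp only [Complex.zero_im] at h1
    have := (hlcast l hl).1
    nlinarith
  have hterm : ∀ l ∈ Finset.Icc m (2*m-1),
      (1 / ((x : ℂ) - (2 * (l : ℂ) - 1) * Real.pi * Complex.I)
        - ∑ ν ∈ Finset.range P,
            (2 * ((l : ℂ) - (3 * 2 ^ (n - 1) - 1) / 2) * Real.pi * Complex.I) ^ ν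
              / ((x : ℂ) - (2 * ((3 * 2 ^ (n - 1) - 1 : ℂ) / 2) - 1) * Real.pi * Complex.I)
                ^ (ν + 1))
      = (a l)^P / (w^P * (w - a l)) := by
    intro l hl
    have e1 : (2 * ((l : ℂ) - (3 * 2 ^ (n - 1) - 1) / 2) * (Real.pi:ℂ) * Complex.I) = a l := by
      rw [hadef, ← hmc]; push_cast; ring
    have e2 : ((x : ℂ) - (2 * ((3 * 2 ^ (n - 1) - 1 : ℂ) / 2) - 1) * Real.pi * Complex.I) = w := by
      rw [hwdef, ← hmc]; push_cast; ring
    have e3 : ((x : ℂ) - (2 * (l : ℂ) - 1) * Real.pi * Complex.I) = w - a l := by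
      rw [hwa l]; push_cast; ring
    rw [e1, e2, e3]
    exact geom_tail48 P w (a l) hw (hwane l hl)
  have habsle : ∀ l ∈ Finset.Icc m (2*m-1),
      ‖(a l)^P / (w^P * (w - a l))‖
      ≤ (|2*(l:ℝ) - (3*(m:ℝ)-1)| * Real.pi)^P /
          (((3*(m:ℝ)-2)*Real.pi)^P * ((2*(m:ℝ)-1)*Real.pi)) := by
    intro l hl
    have hnum : ‖(a l) ^ P‖ = (|2*(l:ℝ) - (3*(m:ℝ)-1)| * Real.pi)^P := by
      rw [norm_pow]; congr 1
      rw [hadef]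
      rw [norm_mul, Complex.norm_I, mul_one, Complex.norm_real, Real.norm_eq_abs]
      rw [abs_mul, abs_of_pos hpi]
    have hAbs : (3*(m:ℝ)-2)*Real.pi ≤ ‖w‖ := by
      have h1 := Complex.abs_im_le_norm w
      rw [hwim, abs_neg, abs_of_pos hA0] at h1
      exact h1
    have hBabs : (2*(m:ℝ)-1)*Real.pi ≤ ‖w - a l‖ := by
      have h1 := Complex.abs_im_le_norm (w - a l)
      rw [hwaim l, abs_neg] at h1
      have hlm := (hlcast l hl).1
      have h2 : (2*(m:ℝ)-1)*Real.pi ≤ (2*(l:ℝ)-1)*Real.pi := by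
        apply mul_le_mul_of_nonneg_right (by linarith) hpi.le
      refine h2.trans ?_
      rwa [abs_of_pos (by nlinarith)] at h1
    have hden : ((3*(m:ℝ)-2)*Real.pi)^P * ((2*(m:ℝ)-1)*Real.pi)
        ≤ ‖w^P * (w - a l)‖ := by
      rw [norm_mul, norm_pow]
      exact mul_le_mul (pow_le_pow_left₀ hA0.le hAbs P) hBabs hB0.le
        (pow_nonneg (norm_nonneg _) _)
    rw [norm_div, hnum]
    exact div_le_div₀ (by positivity) le_rfl (mul_pos (pow_pos hA0 P) hB0) hden
  rw [hIcc, Finset.sum_congr rfl hterm]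
  exact le_trans (norm_sum_le _ _)
    (le_trans (Finset.sum_le_sum habsle) (sum_bound48 m P hm1 hP))
end

section
/- Let x be real and n ≥ 1, P ≥ 1 integers with l_n = (3·2^{n-1}-1)/2. Then Σ_{l=2^{n-1}}^{2^n-1} |1/(x-(2l-1)πi)| · |2(l-l_n)πi/(x-(2l_n-1)πi)|^P ≤ (1/(2π))·(1/3^P). -/
lemma aux_abs_le (x r : ℝ) : |r| ≤ ‖((x:ℂ) - (r:ℂ)*Complex.I)‖ := by
  have h := Complex.abs_im_le_norm ((x:ℂ) - (r:ℂ)*Complex.I)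
  simpa using h

lemma aux_sum_odd (k : ℕ) : ∑ i ∈ Finset.range k, (2*(i:ℝ)+1) = (k:ℝ)^2 := by
  induction k with
  | zero => simp
  | succ k ih => rw [Finset.sum_range_succ, ih]; push_cast; ring

lemma aux_sum_abs (k : ℕ) :
    ∑ i ∈ Finset.range (2*k), |2*(i:ℝ) - 2*(k:ℝ) + 1| = 2*(k:ℝ)^2 := by
  rw [two_mul, Finset.sum_range_add]
  have h1 : ∑ i ∈ Finset.range k, |2*(i:ℝ) - 2*(k:ℝ) + 1| = (k:ℝ)^2 := by
    rw [← aux_sum_odd k, ← Finset.sum_range_reflect (fun j => 2*(j:ℝ)+1) k]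
    apply Finset.sum_congr rfl
    intro i hi
    have hik : i + 1 ≤ k := Finset.mem_range.mp hi
    have hc : ((k - 1 - i : ℕ) : ℝ) = (k:ℝ) - 1 - i := by
      have h' : k - 1 - i = k - (1 + i) := by omega
      rw [h', Nat.cast_sub (by omega)]
      push_cast; ring
    have hiR : (i:ℝ) + 1 ≤ (k:ℝ) := by exact_mod_cast hik
    rw [hc, abs_of_nonpos (by linarith)]
    ring
  have h2 : ∑ i ∈ Finset.range k, |2*((k+i:ℕ):ℝ) - 2*(k:ℝ) + 1| = (k:ℝ)^2 := by
    rw [← aux_sum_odd k]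
    apply Finset.sum_congr rfl
    intro i _
    push_cast
    have hi0 : (0:ℝ) ≤ i := Nat.cast_nonneg i
    rw [abs_of_nonneg (by linarith)]
    ring
  rw [h1, h2]
  ring

theorem multipole_remainder_bound (n P : ℕ) (hn : 1 ≤ n) (hP : 1 ≤ P) (x : ℝ) :
    ∑ l ∈ Finset.Icc ((2:ℕ) ^ (n - 1)) (2 ^ n - 1),
        ‖(1 / ((x : ℂ) - (2 * (l : ℂ) - 1) * Real.pi * Complex.I))‖
          * ‖(2 * ((l : ℂ) - (3 * 2 ^ (n - 1) - 1) / 2) * Real.pi * Complex.I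
              / ((x : ℂ) - (2 * ((3 * 2 ^ (n - 1) - 1 : ℂ) / 2) - 1) * Real.pi * Complex.I))‖ ^ P
      ≤ (1 / (2 * Real.pi)) * (1 / 3 ^ P) := by
  rcases Nat.lt_or_ge n 2 with h2 | hn2
  · -- n = 1
    have hn1 : n = 1 := by omega
    subst hn1
    have hπ := Real.pi_pos
    norm_num [Finset.Icc_self, Finset.sum_singleton]
    rw [zero_pow (by omega : P ≠ 0), mul_zero]
    positivity
  · -- n ≥ 2, rename hn2 to hn
    have hπ := Real.pi_pos
    obtain ⟨k, hk1, hkm, hkn⟩ : ∃ k : ℕ, 1 ≤ k ∧ 2 ^ (n-1) = 2 * k ∧ 2 ^ n = 4 * k := by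
      refine ⟨2 ^ (n-2), Nat.one_le_two_pow, ?_, ?_⟩
      · rw [← pow_succ']; congr 1; omega
      · have e : 2^(n-2+2) = 2^(n-2) * 4 := by rw [pow_add]; norm_num
        rw [Nat.sub_add_cancel hn2] at e; omega
    have hC : (2:ℂ) ^ (n - 1) = 2 * (k:ℂ) := by
      have h1 : ((2 ^ (n-1) : ℕ) : ℂ) = ((2 * k : ℕ) : ℂ) := by rw [hkm]
      push_cast at h1
      exact h1
    have hK1 : (1:ℝ) ≤ (k:ℝ) := by exact_mod_cast hk1
    have h4K : (0:ℝ) < 4*(k:ℝ)-1 := by linarith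
    have h6K : (0:ℝ) < 6*(k:ℝ)-2 := by linarith
    have hπ0 : Real.pi ≠ 0 := ne_of_gt hπ
    rw [hkm, hkn]
    have key : ∀ l ∈ Finset.Icc (2*k) (4*k-1),
        ‖(1 / ((x : ℂ) - (2 * (l : ℂ) - 1) * Real.pi * Complex.I))‖
            * ‖(2 * ((l : ℂ) - (3 * 2 ^ (n - 1) - 1) / 2) * Real.pi * Complex.I
                / ((x : ℂ) - (2 * ((3 * 2 ^ (n - 1) - 1 : ℂ) / 2) - 1) * Real.pi * Complex.I))‖ ^ P
          ≤ ((1/3:ℝ)^(P-1) / ((4*(k:ℝ)-1)*(6*(k:ℝ)-2)*Real.pi)) * |2*(l:ℝ) - 6*(k:ℝ) + 1| := by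
      intro l hl
      rw [Finset.mem_Icc] at hl
      obtain ⟨hl1, hl2⟩ := hl
      have hL1 : 2*(k:ℝ) ≤ (l:ℝ) := by exact_mod_cast hl1
      have hL2 : (l:ℝ) ≤ 4*(k:ℝ) - 1 := by
        have h' : (l:ℝ) ≤ ((4*k-1 : ℕ):ℝ) := by exact_mod_cast hl2
        rw [Nat.cast_sub (by omega)] at h'
        push_cast at h'
        linarith
      -- first factor
      have e1 : (x : ℂ) - (2 * (l : ℂ) - 1) * Real.pi * Complex.I
          = ((x:ℝ):ℂ) - (((2*(l:ℝ)-1)*Real.pi : ℝ):ℂ)*Complex.I := by push_cast; ring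
      have hd1 : (4*(k:ℝ)-1)*Real.pi ≤ ‖((x : ℂ) - (2 * (l : ℂ) - 1) * Real.pi * Complex.I)‖ := by
        rw [e1]
        refine le_trans ?_ (aux_abs_le x ((2*(l:ℝ)-1)*Real.pi))
        rw [abs_of_nonneg (by nlinarith)]
        nlinarith
      have hd1pos : (0:ℝ) < (4*(k:ℝ)-1)*Real.pi := by positivity
      have F1 : ‖(1 / ((x : ℂ) - (2 * (l : ℂ) - 1) * Real.pi * Complex.I))‖
          ≤ 1 / ((4*(k:ℝ)-1)*Real.pi) := by
        rw [norm_div, norm_one]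
        exact one_div_le_one_div_of_le hd1pos hd1
      -- second factor
      have e2 : 2 * ((l : ℂ) - (3 * 2 ^ (n - 1) - 1) / 2) * Real.pi * Complex.I
          = (((2*(l:ℝ) - 6*(k:ℝ) + 1)*Real.pi : ℝ):ℂ) * Complex.I := by
        rw [hC]; push_cast; ring
      have e3 : (x : ℂ) - (2 * ((3 * 2 ^ (n - 1) - 1 : ℂ) / 2) - 1) * Real.pi * Complex.I
          = ((x:ℝ):ℂ) - (((6*(k:ℝ) - 2)*Real.pi : ℝ):ℂ)*Complex.I := by
        rw [hC]; push_cast; ring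
      have hnum : ‖(2 * ((l : ℂ) - (3 * 2 ^ (n - 1) - 1) / 2) * Real.pi * Complex.I)‖
          = |2*(l:ℝ) - 6*(k:ℝ) + 1| * Real.pi := by
        rw [e2, norm_mul, Complex.norm_I, mul_one, Complex.norm_real, Real.norm_eq_abs, abs_mul,
          abs_of_pos hπ]
      have hd2 : (6*(k:ℝ)-2)*Real.pi ≤ ‖((x : ℂ) - (2 * ((3 * 2 ^ (n - 1) - 1 : ℂ) / 2) - 1) * Real.pi * Complex.I)‖ := by
        rw [e3]
        refine le_trans ?_ (aux_abs_le x ((6*(k:ℝ)-2)*Real.pi))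
        rw [abs_of_nonneg (by positivity)]
      have hd2pos : (0:ℝ) < (6*(k:ℝ)-2)*Real.pi := by positivity
      have F2 : ‖(2 * ((l : ℂ) - (3 * 2 ^ (n - 1) - 1) / 2) * Real.pi * Complex.I
                / ((x : ℂ) - (2 * ((3 * 2 ^ (n - 1) - 1 : ℂ) / 2) - 1) * Real.pi * Complex.I))‖
          ≤ |2*(l:ℝ) - 6*(k:ℝ) + 1| / (6*(k:ℝ)-2) := by
        rw [norm_div, hnum]
        calc |2*(l:ℝ) - 6*(k:ℝ) + 1| * Real.pi
                / ‖((x : ℂ) - (2 * ((3 * 2 ^ (n - 1) - 1 : ℂ) / 2) - 1) * Real.pi * Complex.I)‖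
            ≤ |2*(l:ℝ) - 6*(k:ℝ) + 1| * Real.pi / ((6*(k:ℝ)-2)*Real.pi) := by
              apply div_le_div_of_nonneg_left (by positivity) hd2pos hd2
          _ = |2*(l:ℝ) - 6*(k:ℝ) + 1| / (6*(k:ℝ)-2) := mul_div_mul_right _ _ hπ0
      have hr0 : (0:ℝ) ≤ |2*(l:ℝ) - 6*(k:ℝ) + 1| / (6*(k:ℝ)-2) := by positivity
      have hr3 : |2*(l:ℝ) - 6*(k:ℝ) + 1| / (6*(k:ℝ)-2) ≤ 1/3 := by
        rw [div_le_div_iff₀ h6K (by norm_num)]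
        have habs : |2*(l:ℝ) - 6*(k:ℝ) + 1| ≤ 2*(k:ℝ) - 1 := by
          rw [abs_le]; constructor <;> linarith
        linarith
      have F2P : ‖(2 * ((l : ℂ) - (3 * 2 ^ (n - 1) - 1) / 2) * Real.pi * Complex.I
                / ((x : ℂ) - (2 * ((3 * 2 ^ (n - 1) - 1 : ℂ) / 2) - 1) * Real.pi * Complex.I))‖ ^ P
          ≤ (1/3:ℝ)^(P-1) * (|2*(l:ℝ) - 6*(k:ℝ) + 1| / (6*(k:ℝ)-2)) := by
        calc ‖(2 * ((l : ℂ) - (3 * 2 ^ (n - 1) - 1) / 2) * Real.pi * Complex.I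
                / ((x : ℂ) - (2 * ((3 * 2 ^ (n - 1) - 1 : ℂ) / 2) - 1) * Real.pi * Complex.I))‖ ^ P
            ≤ (|2*(l:ℝ) - 6*(k:ℝ) + 1| / (6*(k:ℝ)-2)) ^ P :=
              pow_le_pow_left₀ (norm_nonneg _) F2 P
          _ = (|2*(l:ℝ) - 6*(k:ℝ) + 1| / (6*(k:ℝ)-2))^(P-1)
                * (|2*(l:ℝ) - 6*(k:ℝ) + 1| / (6*(k:ℝ)-2)) := by
              conv_lhs => rw [show P = (P-1) + 1 by omega]
              rw [pow_succ]
          _ ≤ (1/3:ℝ)^(P-1) * (|2*(l:ℝ) - 6*(k:ℝ) + 1| / (6*(k:ℝ)-2)) := by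
              apply mul_le_mul_of_nonneg_right _ hr0
              exact pow_le_pow_left₀ hr0 hr3 _
      calc ‖(1 / ((x : ℂ) - (2 * (l : ℂ) - 1) * Real.pi * Complex.I))‖
            * ‖(2 * ((l : ℂ) - (3 * 2 ^ (n - 1) - 1) / 2) * Real.pi * Complex.I
                / ((x : ℂ) - (2 * ((3 * 2 ^ (n - 1) - 1 : ℂ) / 2) - 1) * Real.pi * Complex.I))‖ ^ P
          ≤ (1 / ((4*(k:ℝ)-1)*Real.pi)) * ((1/3:ℝ)^(P-1) * (|2*(l:ℝ) - 6*(k:ℝ) + 1| / (6*(k:ℝ)-2))) := by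
            apply mul_le_mul F1 F2P (by positivity) (by positivity)
        _ = ((1/3:ℝ)^(P-1) / ((4*(k:ℝ)-1)*(6*(k:ℝ)-2)*Real.pi)) * |2*(l:ℝ) - 6*(k:ℝ) + 1| := by
            field_simp
            try ring
            try exact Or.inl trivial
    refine le_trans (Finset.sum_le_sum key) ?_
    rw [← Finset.mul_sum]
    have hsum : ∑ l ∈ Finset.Icc (2*k) (4*k-1), |2*(l:ℝ) - 6*(k:ℝ) + 1| = 2*(k:ℝ)^2 := by
      rw [← Finset.Ico_add_one_right_eq_Icc, show 4*k - 1 + 1 = 4*k by omega, Finset.sum_Ico_eq_sum_range,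
        show 4*k - 2*k = 2*k by omega, ← aux_sum_abs k]
      apply Finset.sum_congr rfl
      intro i _
      push_cast
      congr 1
      ring
    rw [hsum]
    have hRHS : (1:ℝ)/3^P = (1/3:ℝ)^(P-1) * (1/3) := by
      rw [← pow_succ, ← one_div_pow]
      congr 1
      omega
    rw [hRHS]
    have h3p : (0:ℝ) ≤ (1/3:ℝ)^(P-1) := by positivity
    have hDpos : (0:ℝ) < (4*(k:ℝ)-1)*(6*(k:ℝ)-2)*Real.pi := mul_pos (mul_pos h4K h6K) hπ
    have hfac : (0:ℝ) ≤ 12*(k:ℝ)^2 - 14*(k:ℝ) + 2 := by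
      nlinarith [mul_nonneg (by linarith : (0:ℝ) ≤ 6*(k:ℝ)-1) (by linarith : (0:ℝ) ≤ (k:ℝ)-1)]
    have hkey : 2*(k:ℝ)^2 / ((4*(k:ℝ)-1)*(6*(k:ℝ)-2)*Real.pi) ≤ 1/(6*Real.pi) := by
      rw [div_le_div_iff₀ hDpos (by positivity)]
      nlinarith [mul_nonneg hfac hπ.le]
    calc (1/3:ℝ)^(P-1) / ((4*(k:ℝ)-1)*(6*(k:ℝ)-2)*Real.pi) * (2*(k:ℝ)^2)
        = (1/3:ℝ)^(P-1) * (2*(k:ℝ)^2 / ((4*(k:ℝ)-1)*(6*(k:ℝ)-2)*Real.pi)) := by ring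
      _ ≤ (1/3:ℝ)^(P-1) * (1/(6*Real.pi)) := mul_le_mul_of_nonneg_left hkey h3p
      _ = 1/(2*Real.pi) * ((1/3:ℝ)^(P-1) * (1/3)) := by ring
end

section
/- For every real x and every natural number M, Re(Σ_{l=M+1}^∞ 1/(2x - (2l-1)iπ)) = (1/(2π))·Im(ψ(M + 1/2 + ix/π)), where ψ is the digamma function. -/
/-- The digamma function ψ(z) = Γ'(z)/Γ(z). -/
noncomputable def digamma (z : ℂ) : ℂ := deriv Complex.Gamma z / Complex.Gamma z


open Nat Set Filter Topology Finset

local notation "γ" => Real.eulerMascheroniConstant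

namespace RealDigammaAux

lemma hder {y : ℝ} (hy : 0 < y) : DifferentiableAt ℝ (Real.log ∘ Real.Gamma) y := by
  refine ((Real.differentiableAt_Gamma ?_).log (Real.Gamma_ne_zero ?_)) <;>
  exact fun m ↦ ne_of_gt (by have := m.cast_nonneg (α := ℝ); linarith)

lemma deriv_logGamma {y : ℝ} (hy : 0 < y) :
    deriv (Real.log ∘ Real.Gamma) y = deriv Real.Gamma y / Real.Gamma y := by
  rw [Function.comp_def, deriv.log (Real.differentiableAt_Gamma ?_) (Real.Gamma_pos_of_pos hy).ne']
  exact fun m ↦ ne_of_gt (by have := m.cast_nonneg (α := ℝ); linarith)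

lemma deriv_logGamma_nat (m : ℕ) :
    deriv (Real.log ∘ Real.Gamma) (m + 1) = -γ + harmonic m := by
  rw [deriv_logGamma (by positivity), Real.deriv_Gamma_nat, Real.Gamma_nat_eq_factorial]
  have : (m ! : ℝ) ≠ 0 := by positivity
  field_simp

lemma hder_rec {y : ℝ} (hy : 0 < y) :
    deriv (Real.log ∘ Real.Gamma) (y + 1) = deriv (Real.log ∘ Real.Gamma) y + 1 / y := by
  have h_rec (t : ℝ) (ht : 0 < t) : (Real.log ∘ Real.Gamma) (t + 1)
      = (Real.log ∘ Real.Gamma) t + Real.log t := by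
    simp only [Function.comp_apply, Real.Gamma_add_one ht.ne',
      Real.log_mul ht.ne' (Real.Gamma_pos_of_pos ht).ne', add_comm]
  rw [← deriv_comp_add_const, one_div, ← Real.deriv_log,
    ← deriv_add (hder <| by positivity) (Real.differentiableAt_log hy.ne')]
  apply EventuallyEq.deriv_eq
  filter_upwards [eventually_gt_nhds hy] using h_rec

lemma hshift {x : ℝ} (hx : 0 < x) (n : ℕ) :
    deriv (Real.log ∘ Real.Gamma) (x + n)
      = deriv (Real.log ∘ Real.Gamma) x + ∑ k ∈ range n, 1 / (x + k) := by
  induction n with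
  | zero => simp
  | succ n ih =>
    have : x + (n + 1 : ℕ) = (x + n) + 1 := by push_cast; ring
    rw [this, hder_rec (by positivity), ih, sum_range_succ]
    ring

lemma harmonic_add_sub_le (c : ℕ) : ∀ n : ℕ, (harmonic (n + c) : ℝ) - harmonic n ≤ c / (n + 1) := by
  induction c with
  | zero => intro n; simp
  | succ c ih =>
    intro n
    rw [show n + (c+1) = (n + c) + 1 by ring, harmonic_succ]
    push_cast
    have h1 : ((↑(n + c) : ℝ) + 1)⁻¹ ≤ ((n:ℝ) + 1)⁻¹ := by
      apply inv_anti₀ <;> push_cast <;> [positivity; linarith]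
    have := ih n
    push_cast at this h1 ⊢
    rw [show ((c:ℝ)+1)/(↑n+1) = c/(n+1) + ((n:ℝ)+1)⁻¹ by ring]
    linarith

lemma hasSum_digamma_real (x : ℝ) (hx : 0 < x) :
    HasSum (fun k : ℕ => 1 / (k + 1 : ℝ) - 1 / (k + x))
      (γ + deriv Real.Gamma x / Real.Gamma x) := by
  set f := Real.log ∘ Real.Gamma with hf
  set L : ℝ := γ + deriv Real.Gamma x / Real.Gamma x with hL
  have hLf : L = γ + deriv f x := by rw [hL, deriv_logGamma hx]
  set S : ℕ → ℝ := fun n => ∑ k ∈ range n, (1 / (k + 1 : ℝ) - 1 / (k + x)) with hSdef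
  -- partial sums in terms of harmonic numbers
  have hS : ∀ n : ℕ, S n = (harmonic n : ℝ) - ∑ k ∈ range n, 1 / (x + k) := by
    intro n
    induction n with
    | zero => simp [hSdef]
    | succ n ih =>
      have e1 : S (n+1) = S n + (1 / ((n:ℝ) + 1) - 1 / ((n:ℝ) + x)) := by
        rw [hSdef]; exact sum_range_succ _ n
      have e2 : ∑ k ∈ range (n+1), 1 / (x + (k:ℝ)) = (∑ k ∈ range n, 1 / (x + (k:ℝ))) + 1 / (x + n) :=
        sum_range_succ _ n
      rw [e1, e2, ih, harmonic_succ]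
      push_cast
      rw [add_comm (x : ℝ) (n : ℝ)]
      ring
  have hmono := Real.convexOn_log_Gamma.monotoneOn_deriv (fun y hy => hder (mem_Ioi.mp hy))
  set c : ℕ := Nat.ceil x with hc
  have hc1 : 1 ≤ c := Nat.one_le_ceil_iff.mpr hx
  have hxc : x ≤ c := Nat.le_ceil x
  -- key bounds
  have key : ∀ n : ℕ, |S (n + 1) - L| ≤ c / (n + 1) := by
    intro n
    have hd1 : deriv f ((n:ℝ) + 1) ≤ deriv f (x + (n + 1 : ℕ)) := by
      refine hmono (mem_Ioi.mpr (by positivity)) (mem_Ioi.mpr (by positivity)) ?_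
      push_cast; linarith
    have hd2 : deriv f (x + (n + 1 : ℕ)) ≤ deriv f ((↑(n + c) : ℝ) + 1) := by
      refine hmono (mem_Ioi.mpr (by positivity)) (mem_Ioi.mpr (by positivity)) ?_
      push_cast; linarith
    rw [deriv_logGamma_nat n] at hd1
    rw [deriv_logGamma_nat (n + c)] at hd2
    have hsh := hshift hx (n + 1)
    have hSval : S (n + 1) = (harmonic (n+1) : ℝ) - (deriv f (x + (n+1:ℕ)) - deriv f x) := by
      rw [hS (n+1), hsh]; ring
    have hup : S (n + 1) - L ≤ (harmonic (n+1) : ℝ) - harmonic n := by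
      rw [hSval, hLf]; linarith
    have hlow : -((harmonic (n+c) : ℝ) - harmonic (n+1)) ≤ S (n + 1) - L := by
      rw [hSval, hLf]; linarith
    rw [abs_le]
    constructor
    · refine le_trans (neg_le_neg ?_) hlow
      have hidx : n + c = (n+1) + (c-1) := by omega
      calc (harmonic (n+c) : ℝ) - harmonic (n+1)
          = (harmonic ((n+1) + (c-1)) : ℝ) - harmonic (n+1) := by rw [hidx]
        _ ≤ (c - 1 : ℕ) / ((n + 1 : ℕ) + 1) := harmonic_add_sub_le (c-1) (n+1)
        _ ≤ c / (n + 1) := by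
            have ha : ((c-1:ℕ):ℝ) ≤ (c:ℝ) := by exact_mod_cast Nat.sub_le c 1
            have hb : ((n:ℝ)+1) ≤ ((n+1:ℕ):ℝ)+1 := by push_cast; linarith
            exact div_le_div₀ (by positivity) ha (by positivity) hb
    · refine hup.trans ?_
      rw [harmonic_succ]
      push_cast
      rw [add_sub_cancel_left]
      rw [inv_eq_one_div]
      exact div_le_div₀ (by positivity) (by exact_mod_cast hc1) (by positivity) le_rfl
  -- summability
  have hsumm : Summable (fun k : ℕ => 1 / (k + 1 : ℝ) - 1 / (k + x)) := by
    have hb : Summable (fun k : ℕ => (|x - 1| / min x 1) * (1 / ((k:ℝ) + 1) ^ 2)) := by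
      apply Summable.mul_left
      have := (summable_nat_add_iff (f := fun n : ℕ => 1 / (n:ℝ) ^ 2) 1).mpr
        (Real.summable_one_div_nat_pow.mpr one_lt_two)
      simpa using this
    refine Summable.of_abs (hb.of_nonneg_of_le (fun k => abs_nonneg _) fun k => ?_)
    have hkx : 0 < (k:ℝ) + x := by positivity
    have hterm : 1 / (k + 1 : ℝ) - 1 / (k + x) = (x - 1) / (((k:ℝ) + 1) * ((k:ℝ) + x)) := by
      field_simp
      ring
    rw [hterm, abs_div]
    have hmin : 0 < min x 1 := lt_min hx one_pos
    have habs : |((k:ℝ) + 1) * ((k:ℝ) + x)| = ((k:ℝ) + 1) * ((k:ℝ) + x) := abs_of_pos (by positivity)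
    rw [habs, div_le_iff₀ (by positivity)]
    have hge : min x 1 * (((k:ℝ) + 1) * ((k:ℝ)+1)) ≤ ((k:ℝ) + 1) * ((k:ℝ) + x) := by
      rcases le_total x 1 with h | h
      · rw [min_eq_left h]
        nlinarith [mul_nonneg (mul_nonneg (by positivity : (0:ℝ) ≤ (k:ℝ)+1) (k.cast_nonneg (α := ℝ))) (sub_nonneg.mpr h)]
      · rw [min_eq_right h]
        nlinarith
    have hrw : |x - 1| / min x 1 * (1 / ((k:ℝ) + 1) ^ 2) * (((k:ℝ) + 1) * ((k:ℝ) + x))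
        = |x - 1| * ((((k:ℝ) + 1) * ((k:ℝ) + x)) / (min x 1 * (((k:ℝ) + 1) * ((k:ℝ) + 1)))) := by
      field_simp
    rw [hrw]
    nth_rewrite 1 [← mul_one |x - 1|]
    apply mul_le_mul_of_nonneg_left _ (abs_nonneg _)
    rw [le_div_iff₀ (by positivity)]
    linarith [hge]
  -- conclude
  have htend : Tendsto S atTop (𝓝 L) := by
    rw [← tendsto_add_atTop_iff_nat 1]
    have h0 : Tendsto (fun n : ℕ => (c:ℝ) / (n + 1)) atTop (𝓝 0) := by
      have := tendsto_const_div_atTop_nhds_zero_nat (c:ℝ)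
      have h1 : Tendsto (fun n : ℕ => ((n+1:ℕ):ℝ)) atTop atTop := by
        exact tendsto_natCast_atTop_atTop.comp (tendsto_add_atTop_nat 1)
      have := Tendsto.div_atTop (tendsto_const_nhds (x := (c:ℝ))) h1
      simpa using this
    have : Tendsto (fun n : ℕ => S (n+1) - L) atTop (𝓝 0) := by
      apply squeeze_zero_norm (fun n => key n) h0
    have := this.add_const L
    simpa using this
  have hhs := hsumm.hasSum
  have heq : ∑' k : ℕ, (1 / (k + 1 : ℝ) - 1 / (k + x)) = L :=
    tendsto_nhds_unique hhs.tendsto_sum_nat htend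
  rwa [heq] at hhs

open Complex in
noncomputable def gfun (z : ℂ) : ℂ := -(γ:ℂ) + ∑' k : ℕ, (1/((k:ℂ)+1) - 1/((k:ℂ)+z))

lemma F_eq (k : ℕ) (z : ℂ) (hz : 0 < z.re) :
    1/((k:ℂ)+1) - 1/((k:ℂ)+z) = (z - 1)/(((k:ℂ)+1) * ((k:ℂ)+z)) := by
  have h1 : ((k:ℂ)+1) ≠ 0 := by
    intro h
    have := congrArg Complex.re h
    simp at this
    nlinarith [k.cast_nonneg (α := ℝ)]
  have h2 : ((k:ℂ)+z) ≠ 0 := by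
    intro h
    have := congrArg Complex.re h
    simp at this
    nlinarith [k.cast_nonneg (α := ℝ)]
  field_simp
  ring

lemma F_norm_le (k : ℕ) (z : ℂ) (δ R : ℝ) (hδ : 0 < δ) (hδ1 : δ ≤ 1) (hz : δ < z.re)
    (hR : ‖z‖ ≤ R) :
    ‖1/((k:ℂ)+1) - 1/((k:ℂ)+z)‖ ≤ (R + 1) / (δ * ((k:ℝ)+1)^2) := by
  have hzre : 0 < z.re := hδ.trans hz
  rw [F_eq k z hzre, norm_div, norm_mul]
  have h1 : ‖((k:ℂ)+1)‖ = (k:ℝ)+1 := by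
    rw [show ((k:ℂ)+1) = ((k+1:ℕ):ℂ) by push_cast; ring, Complex.norm_natCast]
    push_cast
    ring
  have h2 : (k:ℝ) + δ ≤ ‖((k:ℂ)+z)‖ := by
    calc (k:ℝ) + δ ≤ ((k:ℂ)+z).re := by
          simp only [Complex.add_re, Complex.natCast_re]
          linarith
      _ ≤ ‖((k:ℂ)+z)‖ := Complex.re_le_norm _
  have h3 : ‖z - 1‖ ≤ R + 1 := by
    calc ‖z - 1‖ ≤ ‖z‖ + ‖(1:ℂ)‖ := norm_sub_le _ _
      _ ≤ R + 1 := by rw [norm_one]; linarith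
  have h4 : δ * ((k:ℝ)+1) ≤ (k:ℝ) + δ := by nlinarith [k.cast_nonneg (α := ℝ)]
  have h5 : δ * ((k:ℝ)+1)^2 ≤ ((k:ℝ)+1) * ((k:ℝ)+δ) := by nlinarith [k.cast_nonneg (α := ℝ)]
  have h6 : δ * ((k:ℝ)+1)^2 ≤ ‖((k:ℂ)+1)‖ * ‖((k:ℂ)+z)‖ := by
    rw [h1]
    calc δ * ((k:ℝ)+1)^2 ≤ ((k:ℝ)+1) * ((k:ℝ)+δ) := h5
      _ ≤ ((k:ℝ)+1) * ‖((k:ℂ)+z)‖ := by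
          apply mul_le_mul_of_nonneg_left h2 (by positivity)
  exact div_le_div₀ (by nlinarith [norm_nonneg z]) h3 (by positivity) h6

lemma summable_u (δ R : ℝ) (hδ : 0 < δ) :
    Summable (fun k : ℕ => (R + 1) / (δ * ((k:ℝ)+1)^2)) := by
  have : Summable (fun k : ℕ => 1 / ((k:ℝ)+1) ^ 2) := by
    have := (summable_nat_add_iff (f := fun n : ℕ => 1 / (n:ℝ) ^ 2) 1).mpr
      (Real.summable_one_div_nat_pow.mpr one_lt_two)
    simpa using this
  have := this.mul_left ((R+1)/δ)
  apply this.congr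
  intro k
  field_simp

lemma summable_F {z : ℂ} (hz : 0 < z.re) :
    Summable (fun k : ℕ => 1/((k:ℂ)+1) - 1/((k:ℂ)+z)) := by
  set δ := min (z.re/2) 1 with hδdef
  have hδ : 0 < δ := lt_min (by linarith) one_pos
  have hδ1 : δ ≤ 1 := min_le_right _ _
  have hδz : δ < z.re := lt_of_le_of_lt (min_le_left _ _) (by linarith)
  apply Summable.of_norm
  exact (summable_u δ ‖z‖ hδ).of_nonneg_of_le (fun k => norm_nonneg _)
    (fun k => F_norm_le k z δ ‖z‖ hδ hδ1 hδz le_rfl)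

lemma gfun_differentiableOn : DifferentiableOn ℂ gfun {z : ℂ | 0 < z.re} := by
  have : DifferentiableOn ℂ (fun z : ℂ => ∑' k : ℕ, (1/((k:ℂ)+1) - 1/((k:ℂ)+z)))
      {z : ℂ | 0 < z.re} := by
    intro z₀ hz₀
    simp only [Set.mem_setOf_eq] at hz₀
    set δ := min (z₀.re/2) 1 with hδdef
    have hδ : 0 < δ := lt_min (by linarith) one_pos
    have hδ1 : δ ≤ 1 := min_le_right _ _
    set V : Set ℂ := Metric.ball z₀ δ with hV
    have hVz : ∀ z ∈ V, δ < z.re ∧ ‖z‖ ≤ ‖z₀‖ + δ := by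
      intro z hz
      rw [hV, Metric.mem_ball, Complex.dist_eq] at hz
      constructor
      · have : |z.re - z₀.re| < δ := by
          calc |z.re - z₀.re| = |(z - z₀).re| := by simp [Complex.sub_re]
            _ ≤ ‖z - z₀‖ := Complex.abs_re_le_norm _
            _ < δ := hz
        have h2 := abs_lt.mp this
        have h3 : δ ≤ z₀.re / 2 := min_le_left _ _
        linarith
      · have hz' : ‖z - z₀‖ < δ := hz
        calc ‖z‖ = ‖z₀ + (z - z₀)‖ := by ring_nf
          _ ≤ ‖z₀‖ + ‖z - z₀‖ := norm_add_le _ _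
          _ ≤ ‖z₀‖ + δ := by linarith
    have hdiff : DifferentiableOn ℂ (fun z : ℂ => ∑' k : ℕ, (1/((k:ℂ)+1) - 1/((k:ℂ)+z))) V := by
      apply Complex.differentiableOn_tsum_of_summable_norm (summable_u δ (‖z₀‖ + δ) hδ)
        (fun k => ?_) Metric.isOpen_ball
        (fun k w hw => F_norm_le k w δ (‖z₀‖ + δ) hδ hδ1 (hVz w hw).1 (hVz w hw).2)
      apply DifferentiableOn.sub
      · exact differentiableOn_const _
      · apply DifferentiableOn.div (differentiableOn_const _)
        · exact (differentiable_const _).differentiableOn.add differentiable_id.differentiableOn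
        · intro w hw
          intro h
          have h1 := (hVz w hw).1
          have := congrArg Complex.re h
          simp at this
          nlinarith [k.cast_nonneg (α := ℝ)]
    exact (hdiff.differentiableAt (Metric.isOpen_ball.mem_nhds (by
      simp [hV, hδ]))).differentiableWithinAt
  exact (differentiableOn_const _).add this

open Complex in
lemma Gamma_ne_neg_nat_of_re_pos {z : ℂ} (hz : 0 < z.re) : ∀ m : ℕ, z ≠ -m := by
  intro m h
  have := congrArg Complex.re h
  simp at this
  nlinarith [m.cast_nonneg (α := ℝ)]

lemma deriv_Gamma_ofReal (x : ℝ) (hx : 0 < x) :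
    deriv Complex.Gamma (x : ℂ) = ((deriv Real.Gamma x : ℝ) : ℂ) := by
  have hre : (0:ℝ) < ((x:ℂ)).re := by simpa using hx
  have hdiff : DifferentiableAt ℂ Complex.Gamma (x:ℂ) :=
    Complex.differentiableAt_Gamma _ (Gamma_ne_neg_nat_of_re_pos hre)
  set d := deriv Complex.Gamma (x:ℂ) with hd
  have hder : HasDerivAt Complex.Gamma d (x:ℂ) := hdiff.hasDerivAt
  have hslope : Filter.Tendsto (slope Complex.Gamma (x:ℂ)) (nhdsWithin (x:ℂ) {(x:ℂ)}ᶜ) (nhds d) :=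
    hasDerivAt_iff_tendsto_slope.mp hder
  -- conjugation trick: d is real
  have hconjmap : Filter.Tendsto (fun z : ℂ => (starRingEnd ℂ) z)
      (nhdsWithin (x:ℂ) {(x:ℂ)}ᶜ) (nhdsWithin (x:ℂ) {(x:ℂ)}ᶜ) := by
    rw [tendsto_nhdsWithin_iff]
    constructor
    · have h1 : Filter.Tendsto (fun z : ℂ => (starRingEnd ℂ) z) (nhds (x:ℂ))
          (nhds ((starRingEnd ℂ) (x:ℂ))) := Complex.continuous_conj.tendsto _
      rw [Complex.conj_ofReal] at h1
      exact h1.mono_left nhdsWithin_le_nhds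
    · filter_upwards [self_mem_nhdsWithin] with z hz
      simp only [Set.mem_compl_iff, Set.mem_singleton_iff] at hz ⊢
      intro h
      apply hz
      have h2 := congrArg (starRingEnd ℂ) h
      rwa [Complex.conj_conj, Complex.conj_ofReal] at h2
  have h2 : Filter.Tendsto
      (fun z : ℂ => (starRingEnd ℂ) (slope Complex.Gamma (x:ℂ) ((starRingEnd ℂ) z)))
      (nhdsWithin (x:ℂ) {(x:ℂ)}ᶜ) (nhds ((starRingEnd ℂ) d)) :=
    (Complex.continuous_conj.tendsto d).comp (hslope.comp hconjmap)
  have heq : (fun z : ℂ => (starRingEnd ℂ) (slope Complex.Gamma (x:ℂ) ((starRingEnd ℂ) z)))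
      = slope Complex.Gamma (x:ℂ) := by
    funext z
    rw [slope_def_field, slope_def_field, map_div₀, map_sub, map_sub, Complex.Gamma_conj,
      Complex.conj_conj, ← Complex.Gamma_conj, Complex.conj_ofReal, Complex.conj_conj]
  rw [heq] at h2
  have hdd : (starRingEnd ℂ) d = d := tendsto_nhds_unique h2 hslope
  have him : d.im = 0 := Complex.conj_eq_iff_im.mp hdd
  have h3 := hder.real_of_complex
  have h4 : (fun y : ℝ => (Complex.Gamma (y:ℂ)).re) = Real.Gamma := by
    funext y
    rw [Complex.Gamma_ofReal, Complex.ofReal_re]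
  rw [h4] at h3
  have h5 : deriv Real.Gamma x = d.re := h3.deriv
  refine Complex.ext ?_ ?_
  · simp [h5]
  · simp [him]

lemma agree_real (t : ℝ) (ht : 0 < t) : digamma (t:ℂ) = gfun (t:ℂ) := by
  have hsum := hasSum_digamma_real t ht
  have h2 : HasSum (fun k : ℕ => (1/((k:ℂ)+1) - 1/((k:ℂ)+(t:ℂ))))
      (((γ + deriv Real.Gamma t / Real.Gamma t : ℝ) : ℂ)) := by
    have h3 := hsum.mapL Complex.ofRealCLM
    simp only [Complex.ofRealCLM_apply] at h3
    have hfk : (fun k : ℕ => (1/((k:ℂ)+1) - 1/((k:ℂ)+(t:ℂ))))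
        = fun k : ℕ => (((1/(k+1:ℝ) - 1/(k+t)) : ℝ) : ℂ) := by
      funext k
      push_cast
      ring
    rw [hfk]
    exact h3
  have hg : gfun (t:ℂ) = (((deriv Real.Gamma t / Real.Gamma t : ℝ)) : ℂ) := by
    rw [gfun, h2.tsum_eq]
    push_cast
    ring
  rw [digamma, deriv_Gamma_ofReal t ht, Complex.Gamma_ofReal, hg, Complex.ofReal_div]

lemma digamma_eq_gfun {z : ℂ} (hz : 0 < z.re) : digamma z = gfun z := by
  set U : Set ℂ := {w : ℂ | 0 < w.re} with hU
  have hUo : IsOpen U := isOpen_lt continuous_const Complex.continuous_re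
  have hUc : IsPreconnected U := (convex_halfSpace_re_gt 0).isPreconnected
  have hGd : DifferentiableOn ℂ Complex.Gamma U := fun w hw =>
    (Complex.differentiableAt_Gamma _ (Gamma_ne_neg_nat_of_re_pos hw)).differentiableWithinAt
  have hGa : AnalyticOnNhd ℂ Complex.Gamma U := hGd.analyticOnNhd hUo
  have hpsia : AnalyticOnNhd ℂ digamma U := by
    have := (hGa.deriv.div hGa (fun w hw => Complex.Gamma_ne_zero_of_re_pos hw))
    exact this
  have hga : AnalyticOnNhd ℂ gfun U := gfun_differentiableOn.analyticOnNhd hUo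
  have hfreq : ∃ᶠ w in nhdsWithin (1:ℂ) {(1:ℂ)}ᶜ, digamma w = gfun w := by
    have hseq : Filter.Tendsto (fun n : ℕ => ((1 + 1/((n:ℝ)+1) : ℝ) : ℂ)) Filter.atTop
        (nhdsWithin (1:ℂ) {(1:ℂ)}ᶜ) := by
      rw [tendsto_nhdsWithin_iff]
      constructor
      · have ht : Filter.Tendsto (fun n : ℕ => (1 + 1/((n:ℝ)+1) : ℝ)) Filter.atTop (nhds 1) := by
          have h0 : Filter.Tendsto (fun n : ℕ => 1/((n:ℝ)+1)) Filter.atTop (nhds 0) :=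
            tendsto_one_div_add_atTop_nhds_zero_nat
          simpa using h0.const_add 1
        have h2 := (Complex.continuous_ofReal.tendsto (1:ℝ)).comp ht
        simpa [Function.comp_def] using h2
      · filter_upwards with n
        simp only [Set.mem_compl_iff, Set.mem_singleton_iff]
        intro h
        rw [show (1:ℂ) = ((1:ℝ):ℂ) by norm_num, Complex.ofReal_inj] at h
        have : 0 < 1/((n:ℝ)+1) := by positivity
        linarith
    apply hseq.frequently
    apply Filter.Frequently.of_forall
    intro n
    exact agree_real _ (by positivity)
  exact hpsia.eqOn_of_preconnected_of_frequently_eq hga hUc (by simp [hU]) hfreq hz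

lemma inv_re_aux (r s : ℝ) : (1/((r:ℂ) + (s:ℂ)*Complex.I)).re = r/(r^2+s^2) := by
  rw [one_div, Complex.inv_re, Complex.normSq_apply]
  simp
  ring_nf

lemma inv_im_aux (r s : ℝ) : (1/((r:ℂ) + (s:ℂ)*Complex.I)).im = -s/(r^2+s^2) := by
  rw [one_div, Complex.inv_im, Complex.normSq_apply]
  simp
  ring_nf

lemma term_eq (x : ℝ) (M l : ℕ) :
    (1 / (2 * (x : ℂ) - (2 * ((l : ℂ) + M + 1) - 1) * Complex.I * Real.pi)).re
    = (1/(2*Real.pi)) * ((1/((l:ℂ)+1)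
        - 1/((l:ℂ)+((M:ℂ) + 1/2 + Complex.I * x / Real.pi))).im) := by
  have hπ := Real.pi_pos
  have hπc : ((Real.pi : ℝ) : ℂ) ≠ 0 := Complex.ofReal_ne_zero.mpr (ne_of_gt hπ)
  have e1 : (2 * (x : ℂ) - (2 * ((l : ℂ) + M + 1) - 1) * Complex.I * Real.pi)
      = ((2*x : ℝ) : ℂ) + ((-((2*(l:ℝ)+2*M+1) * Real.pi) : ℝ) : ℂ) * Complex.I := by
    push_cast
    ring
  have e2 : ((l:ℂ)+((M:ℂ) + 1/2 + Complex.I * x / Real.pi))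
      = (((l:ℝ)+M+1/2 : ℝ) : ℂ) + ((x/Real.pi : ℝ) : ℂ) * Complex.I := by
    push_cast
    field_simp
    ring
  have e3 : (1/((l:ℂ)+1)).im = 0 := by
    have : (1/((l:ℂ)+1)) = ((1/((l:ℝ)+1) : ℝ) : ℂ) := by push_cast; ring
    rw [this, Complex.ofReal_im]
  rw [e1, e2, inv_re_aux, Complex.sub_im, e3, inv_im_aux]
  have hd1 : (2*x)^2 + (-((2*(l:ℝ)+2*M+1) * Real.pi))^2 > 0 := by
    have h1 : (0:ℝ) < 2*(l:ℝ)+2*M+1 := by positivity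
    have h2 : (0:ℝ) < ((2*(l:ℝ)+2*M+1) * Real.pi) := by positivity
    nlinarith [sq_nonneg (2*x)]
  have hd2 : ((l:ℝ)+M+1/2)^2 + (x/Real.pi)^2 > 0 := by positivity
  field_simp
  ring

end RealDigammaAux

open RealDigammaAux in
theorem matsubara_tail_digamma (x : ℝ) (M : ℕ) :
    ∑' l : ℕ, (1 / (2 * (x : ℂ) - (2 * ((l : ℂ) + M + 1) - 1) * Complex.I * Real.pi)).re
      = (1 / (2 * Real.pi)) *
        (digamma ((M : ℂ) + 1 / 2 + Complex.I * x / Real.pi)).im := by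
  have hπ := Real.pi_pos
  have hπc : ((Real.pi : ℝ) : ℂ) ≠ 0 := Complex.ofReal_ne_zero.mpr (ne_of_gt hπ)
  set z : ℂ := (M : ℂ) + 1 / 2 + Complex.I * x / Real.pi with hzdef
  have hzform : z = (((M:ℝ)+1/2 : ℝ) : ℂ) + ((x/Real.pi : ℝ) : ℂ) * Complex.I := by
    rw [hzdef]
    push_cast
    field_simp
  have hre : 0 < z.re := by
    rw [hzform]
    simp
    positivity
  rw [digamma_eq_gfun hre]
  have hsum := (summable_F hre).hasSum
  have him := hsum.mapL Complex.imCLM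
  simp only [Complex.imCLM_apply] at him
  have h1 : ∀ l : ℕ,
      (1 / (2 * (x : ℂ) - (2 * ((l : ℂ) + M + 1) - 1) * Complex.I * Real.pi)).re
      = (1/(2*Real.pi)) * ((1/((l:ℂ)+1) - 1/((l:ℂ)+z)).im) := fun l => term_eq x M l
  rw [tsum_congr h1, tsum_mul_left, him.tsum_eq]
  congr 1
  rw [gfun, Complex.add_im]
  simp
end
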